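/- Let λ ∈ ℚ^n be dominant and regular and let w ∈ S_n. Then there exists exactly one subset I ⊆ Φ⁺ such that w·λ + ∑_{α∈I} α = wλ. (This is Lemma 3(ii): counting P as a multiset indexed by subsets of Φ⁺, there is a unique element x of P with w·λ + x = wλ.) -/
import Mathlib

open Finset

/-- The positive root `ε_i − ε_j` (for `i < j`) of `gl_n`, as a vector in `ℚ^n`. -/
def posRoot {n : ℕ} (i j : Fin n) : Fin n → ℚ :=
  fun k => (if k = i then 1 else 0) - (if k = j then 1 else 0)

/-- The set `Φ⁺ = { ε_i − ε_j : i < j }` of positive roots of `gl_n`. -/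
def PosRoots (n : ℕ) : Finset (Fin n → ℚ) :=
  ((Finset.univ : Finset (Fin n × Fin n)).filter (fun p => p.1 < p.2)).image
    (fun p => posRoot p.1 p.2)

/-- The action of `S_n` on weights by permuting coordinates: `(wλ)_i = λ_{w⁻¹ i}`. -/
def wAct {n : ℕ} (w : Equiv.Perm (Fin n)) (v : Fin n → ℚ) : Fin n → ℚ :=
  fun i => v (w⁻¹ i)

/-- `ρ = (1/2) ∑_{α ∈ Φ⁺} α`. -/
def rho (n : ℕ) : Fin n → ℚ := (1 / 2 : ℚ) • ∑ α ∈ PosRoots n, α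

/-- The dot action `w·λ = w(λ+ρ) − ρ`. -/
def dotAct {n : ℕ} (w : Equiv.Perm (Fin n)) (lam : Fin n → ℚ) : Fin n → ℚ :=
  wAct w (lam + rho n) - rho n

/-- A weight is integral if all of its coordinates are integers. -/
def Integral {n : ℕ} (lam : Fin n → ℚ) : Prop := ∀ i, ∃ m : ℤ, lam i = (m : ℚ)

/-- A weight is dominant if it is integral and `λ_i − λ_{i+1} ≥ 0` for all consecutive `i`. -/
def Dominant {n : ℕ} (lam : Fin n → ℚ) : Prop :=
  Integral lam ∧ ∀ i j : Fin n, (i : ℕ) + 1 = (j : ℕ) → 0 ≤ lam i - lam j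

/-- A weight is regular if `λ_i − λ_j` is a nonzero integer for all `i ≠ j`. -/
def Regular {n : ℕ} (lam : Fin n → ℚ) : Prop :=
  ∀ i j : Fin n, i ≠ j → ∃ m : ℤ, m ≠ 0 ∧ lam i - lam j = (m : ℚ)

/-! ### Auxiliary lemmas -/

lemma posRoot_inj {n : ℕ} {i j i' j' : Fin n} (hij : i < j) (hij' : i' < j')
    (h : posRoot i j = posRoot i' j') : i = i' ∧ j = j' := by
  have h1 := congrFun h i
  have h2 := congrFun h j
  simp only [posRoot, hij.ne, hij.ne', if_true, if_false, if_pos rfl, if_neg] at h1 h2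
  constructor
  · split_ifs at h1 <;> first | assumption | norm_num at h1
  · split_ifs at h2 <;> first | assumption | norm_num at h2

lemma sum_image_roots {n : ℕ} (S : Finset (Fin n × Fin n)) (hS : ∀ p ∈ S, p.1 < p.2) :
    ∑ α ∈ S.image (fun p => posRoot p.1 p.2), α = ∑ p ∈ S, posRoot p.1 p.2 :=
  Finset.sum_image (fun p hp q hq h => by
    obtain ⟨h1, h2⟩ := posRoot_inj (hS p hp) (hS q hq) h
    exact Prod.ext h1 h2)

lemma sum_roots_coord {n : ℕ} (c : Fin n × Fin n → Prop) [DecidablePred c] (k : Fin n) :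
    (∑ p ∈ univ.filter (fun p : Fin n × Fin n => p.1 < p.2 ∧ c p), posRoot p.1 p.2) k
      = ((univ.filter (fun j => k < j ∧ c (k, j))).card : ℚ)
        - ((univ.filter (fun i => i < k ∧ c (i, k))).card : ℚ) := by
  rw [Finset.sum_apply, Finset.sum_filter, Fintype.sum_prod_type]
  have step : ∀ i j : Fin n,
      (if i < j ∧ c (i, j) then posRoot i j k else 0)
        = (if k = i then (if i < j ∧ c (i, j) then (1:ℚ) else 0) else 0)
          - (if k = j then (if i < j ∧ c (i, j) then (1:ℚ) else 0) else 0) := by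
    intro i j
    simp only [posRoot]
    split_ifs <;> norm_num
  simp only [step, Finset.sum_sub_distrib]
  congr 1
  · have inner : ∀ i : Fin n,
        (∑ j, (if k = i then (if i < j ∧ c (i, j) then (1:ℚ) else 0) else 0))
          = if k = i then ((univ.filter (fun j => i < j ∧ c (i, j))).card : ℚ) else 0 := by
      intro i
      split_ifs with h
      · rw [Finset.sum_boole]
      · simp
    simp only [inner]
    rw [Finset.sum_ite_eq]
    simp
  · have inner : ∀ i : Fin n,
        (∑ j, (if k = j then (if i < j ∧ c (i, j) then (1:ℚ) else 0) else 0))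
          = (if i < k ∧ c (i, k) then (1:ℚ) else 0) := by
      intro i
      rw [Finset.sum_ite_eq]
      simp
    simp only [inner]
    rw [Finset.sum_boole]

lemma card_filter_lt' {n : ℕ} (k : Fin n) :
    (univ.filter fun m : Fin n => m < k).card = (k : ℕ) := by
  have : (univ.filter fun m : Fin n => m < k) = Finset.Iio k := by ext m; simp
  rw [this, Fin.card_Iio]

lemma card_filter_gt' {n : ℕ} (k : Fin n) :
    (univ.filter fun m : Fin n => k < m).card = n - 1 - (k : ℕ) := by
  have : (univ.filter fun m : Fin n => k < m) = Finset.Ioi k := by ext m; simp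
  rw [this, Fin.card_Ioi]

lemma card_perm_lt {n : ℕ} (e : Equiv.Perm (Fin n)) (c : Fin n) :
    (univ.filter fun m : Fin n => e m < c).card = (c : ℕ) := by
  rw [← card_filter_lt' c]
  apply Finset.card_bij (fun m _ => e m)
  · intro a ha; simp at ha ⊢; exact ha
  · intro a ha b hb hab; exact e.injective hab
  · intro b hb
    refine ⟨e⁻¹ b, ?_, by simp⟩
    simp at hb ⊢; simpa using hb

lemma count_key {n : ℕ} (e : Equiv.Perm (Fin n)) (k : Fin n) :
    ((e k : ℕ) + (univ.filter fun m : Fin n => m < k ∧ e k < e m).card)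
      = (k : ℕ) + (univ.filter fun m : Fin n => k < m ∧ e m < e k).card := by
  have key1 := Finset.card_filter_add_card_filter_not
    (s := univ.filter (fun m : Fin n => e m < e k)) (p := fun m => m < k)
  have key2 := Finset.card_filter_add_card_filter_not
    (s := univ.filter (fun m : Fin n => m < k)) (p := fun m => e m < e k)
  have eA : ((univ.filter (fun m : Fin n => e m < e k)).filter (fun m => m < k))
      = univ.filter (fun m : Fin n => m < k ∧ e m < e k) := by
    ext m; simp; tauto
  have eB : ((univ.filter (fun m : Fin n => e m < e k)).filter (fun m => ¬ m < k))
      = univ.filter (fun m : Fin n => k < m ∧ e m < e k) := by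
    ext m; simp only [mem_filter, mem_univ, true_and]
    constructor
    · rintro ⟨h1, h2⟩
      refine ⟨lt_of_le_of_ne (not_lt.1 h2) ?_, h1⟩
      intro hk; exact absurd (hk ▸ h1) (lt_irrefl _)
    · rintro ⟨h1, h2⟩; exact ⟨h2, not_lt.2 h1.le⟩
  have eC : ((univ.filter (fun m : Fin n => m < k)).filter (fun m => e m < e k))
      = univ.filter (fun m : Fin n => m < k ∧ e m < e k) := by
    ext m; simp
  have eD : ((univ.filter (fun m : Fin n => m < k)).filter (fun m => ¬ e m < e k))
      = univ.filter (fun m : Fin n => m < k ∧ e k < e m) := by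
    ext m; simp only [mem_filter, mem_univ, true_and]
    constructor
    · rintro ⟨h1, h2⟩
      refine ⟨h1, lt_of_le_of_ne (not_lt.1 h2) ?_⟩
      intro hk
      exact absurd (e.injective hk) (ne_of_gt h1)
    · rintro ⟨h1, h2⟩; exact ⟨h1, not_lt.2 h2.le⟩
  rw [eA, eB, card_perm_lt] at key1
  rw [eC, eD, card_filter_lt'] at key2
  omega

lemma rho_apply {n : ℕ} (k : Fin n) :
    rho n k = ((n : ℚ) - 1 - 2 * (k : ℕ)) / 2 := by
  have himg : ((Finset.univ : Finset (Fin n × Fin n)).filter (fun p => p.1 < p.2))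
      = univ.filter (fun p : Fin n × Fin n => p.1 < p.2 ∧ (fun _ => True) p) := by
    simp
  have hsum : (∑ α ∈ PosRoots n, α) = ∑ p ∈ ((Finset.univ : Finset (Fin n × Fin n)).filter
      (fun p => p.1 < p.2)), posRoot p.1 p.2 :=
    sum_image_roots _ (fun p hp => (mem_filter.1 hp).2)
  have hcoord := sum_roots_coord (fun _ : Fin n × Fin n => True) k
  rw [← himg] at hcoord
  have hk : (k : ℕ) < n := k.isLt
  have hcast : ((n - 1 - (k : ℕ) : ℕ) : ℚ) + (1 + (k : ℕ)) = (n : ℚ) := by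
    have : (n - 1 - (k : ℕ)) + (1 + (k : ℕ)) = n := by omega
    exact_mod_cast congrArg (Nat.cast : ℕ → ℚ) this
  simp only [rho, Pi.smul_apply, smul_eq_mul, hsum, hcoord]
  simp only [and_true]
  rw [card_filter_gt', card_filter_lt']
  linarith

lemma rho_sub {n : ℕ} (a b : Fin n) :
    rho n a - rho n b = ((b : ℕ) : ℚ) - ((a : ℕ) : ℚ) := by
  rw [rho_apply, rho_apply]; ring

lemma sum_N {n : ℕ} (w : Equiv.Perm (Fin n)) :
    ∑ p ∈ univ.filter (fun p : Fin n × Fin n => p.1 < p.2 ∧ w⁻¹ p.2 < w⁻¹ p.1),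
        posRoot p.1 p.2
      = rho n - wAct w (rho n) := by
  funext k
  have hw : wAct w (rho n) k = rho n (w⁻¹ k) := rfl
  rw [Pi.sub_apply, hw, rho_sub, sum_roots_coord (fun p => w⁻¹ p.2 < w⁻¹ p.1) k]
  have := count_key w⁻¹ k
  have := congrArg (Nat.cast : ℕ → ℚ) this
  push_cast at this
  linarith

lemma F_sum {n : ℕ} (g : Fin n → ℚ) (S : Finset (Fin n × Fin n)) :
    ∑ k, (∑ p ∈ S, posRoot p.1 p.2) k * g k = ∑ p ∈ S, (g p.1 - g p.2) := by
  simp only [Finset.sum_apply, Finset.sum_mul]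
  rw [Finset.sum_comm]
  apply Finset.sum_congr rfl
  intro p _
  simp [posRoot, sub_mul, ite_mul, Finset.sum_sub_distrib, Finset.sum_ite_eq']

lemma cond_iff {n : ℕ} (w : Equiv.Perm (Fin n)) (lam : Fin n → ℚ) (X : Fin n → ℚ) :
    dotAct w lam + X = wAct w lam ↔ X = rho n - wAct w (rho n) := by
  have expand : ∀ i, dotAct w lam i = wAct w lam i + wAct w (rho n) i - rho n i := by
    intro i
    simp only [dotAct, wAct, Pi.sub_apply, Pi.add_apply]
  constructor <;> intro h <;> funext i <;> have h' := congrFun h i <;>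
    simp only [Pi.add_apply, Pi.sub_apply, expand i] at h' ⊢ <;> linarith

/-- Lemma 3(ii): for dominant regular `lam` and `w` in `S_n`, there is exactly one
subset `I` of the positive roots with `w·lam + (sum of I) = w lam`. -/
theorem lemma3_ii {n : ℕ} (hn : 1 ≤ n) (lam : Fin n → ℚ)
    (hdom : Dominant lam) (hreg : Regular lam) (w : Equiv.Perm (Fin n)) :
    ∃! I : Finset (Fin n → ℚ),
      I ⊆ PosRoots n ∧ dotAct w lam + ∑ α ∈ I, α = wAct w lam := by
  classical
  set N : Finset (Fin n × Fin n) :=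
    univ.filter (fun p : Fin n × Fin n => p.1 < p.2 ∧ w⁻¹ p.2 < w⁻¹ p.1) with hNdef
  have hNlt : ∀ p ∈ N, p.1 < p.2 := fun p hp => (mem_filter.1 hp).2.1
  set g : Fin n → ℚ := wAct w (rho n) with hgdef
  have gdiff : ∀ p : Fin n × Fin n, g p.1 - g p.2
      = ((w⁻¹ p.2 : Fin n) : ℕ) - (((w⁻¹ p.1 : Fin n) : ℕ) : ℚ) := by
    intro p
    have : g p.1 = rho n (w⁻¹ p.1) := rfl
    have h2 : g p.2 = rho n (w⁻¹ p.2) := rfl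
    rw [this, h2, rho_sub]
  refine ⟨N.image (fun p => posRoot p.1 p.2), ⟨?_, ?_⟩, ?_⟩
  · apply Finset.image_subset_image
    intro p hp
    rw [hNdef] at hp
    simp only [mem_filter] at hp ⊢
    exact ⟨hp.1, hp.2.1⟩
  · rw [cond_iff, sum_image_roots _ hNlt]
    exact sum_N w
  · rintro I ⟨hIsub, hIeq⟩
    rw [cond_iff] at hIeq
    set S : Finset (Fin n × Fin n) :=
      univ.filter (fun p : Fin n × Fin n => p.1 < p.2 ∧ posRoot p.1 p.2 ∈ I) with hSdef
    have hSlt : ∀ p ∈ S, p.1 < p.2 := fun p hp => (mem_filter.1 hp).2.1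
    have hI_img : I = S.image (fun p => posRoot p.1 p.2) := by
      ext α
      constructor
      · intro hα
        have := hIsub hα
        simp only [PosRoots, mem_image, mem_filter, mem_univ, true_and] at this
        obtain ⟨p, hp, rfl⟩ := this
        exact mem_image.2 ⟨p, mem_filter.2 ⟨mem_univ p, hp, hα⟩, rfl⟩
      · intro hα
        obtain ⟨p, hp, rfl⟩ := mem_image.1 hα
        exact (mem_filter.1 hp).2.2
    have hsum : ∑ p ∈ S, posRoot p.1 p.2 = ∑ p ∈ N, posRoot p.1 p.2 := by
      rw [← sum_image_roots S hSlt, ← hI_img, hIeq, sum_N w]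
    have hF : ∑ p ∈ S, (g p.1 - g p.2) = ∑ p ∈ N, (g p.1 - g p.2) := by
      rw [← F_sum g S, ← F_sum g N, hsum]
    have signN : ∀ p ∈ N, g p.1 - g p.2 < 0 := by
      intro p hp
      rw [hNdef] at hp
      have h := (mem_filter.1 hp).2.2
      rw [gdiff p]
      have : ((w⁻¹ p.2 : Fin n) : ℕ) < ((w⁻¹ p.1 : Fin n) : ℕ) := h
      have := (Nat.cast_lt (α := ℚ)).2 this
      linarith
    have signSN : ∀ p ∈ S \ N, 0 < g p.1 - g p.2 := by
      intro p hp
      rw [mem_sdiff] at hp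
      obtain ⟨hpS, hpN⟩ := hp
      have hlt := hSlt p hpS
      have hne : (w⁻¹ p.1 : Fin n) ≠ w⁻¹ p.2 := fun h =>
        absurd (w⁻¹.injective h) (ne_of_lt hlt)
      have hnot : ¬ (w⁻¹ p.2 : Fin n) < w⁻¹ p.1 := by
        intro h
        exact hpN (by rw [hNdef]; exact mem_filter.2 ⟨mem_univ p, hlt, h⟩)
      have : (w⁻¹ p.1 : Fin n) < w⁻¹ p.2 := lt_of_le_of_ne (not_lt.1 hnot) hne
      rw [gdiff p]
      have : ((w⁻¹ p.1 : Fin n) : ℕ) < ((w⁻¹ p.2 : Fin n) : ℕ) := this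
      have := (Nat.cast_lt (α := ℚ)).2 this
      linarith
    have split1 := Finset.sum_inter_add_sum_sdiff S N (fun p => g p.1 - g p.2)
    have split2 := Finset.sum_inter_add_sum_sdiff N S (fun p => g p.1 - g p.2)
    rw [Finset.inter_comm] at split2
    have hdiff_eq : ∑ p ∈ S \ N, (g p.1 - g p.2) = ∑ p ∈ N \ S, (g p.1 - g p.2) := by
      linarith
    have hA : (0:ℚ) ≤ ∑ p ∈ S \ N, (g p.1 - g p.2) :=
      Finset.sum_nonneg fun p hp => (signSN p hp).le
    have hB : ∑ p ∈ N \ S, (g p.1 - g p.2) ≤ 0 :=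
      Finset.sum_nonpos fun p hp => (signN p (mem_sdiff.1 hp).1).le
    have hSN : S \ N = ∅ := by
      by_contra hne
      have hne' : (S \ N).Nonempty := Finset.nonempty_of_ne_empty hne
      have := Finset.sum_pos signSN hne'
      linarith
    have hNS : N \ S = ∅ := by
      by_contra hne
      have hne' : (N \ S).Nonempty := Finset.nonempty_of_ne_empty hne
      have := Finset.sum_neg (fun p hp => signN p (mem_sdiff.1 hp).1) hne'
      linarith
    have hSeqN : S = N :=
      Finset.Subset.antisymm (Finset.sdiff_eq_empty_iff_subset.1 hSN)
        (Finset.sdiff_eq_empty_iff_subset.1 hNS)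
    rw [hI_img, hSeqN]
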